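/- For the LIF neuron with soft reset, if the scale-bearing incoming block of hidden neuron i is normalized so that ‖P_in[:,i]‖_p^p + |U_thr,i|^p = 1 with normalization scalar a_i = (‖P_in[:,i]‖_p^p + |U_thr,i|^p)^{1/p} > 0, then applying the membrane rescaling with A = Diag(1/a₁,…,1/a_m) yields an LIF network with identical spike outputs at all timesteps and normalized scale-bearing blocks. -/

import Mathlib

/-- Threshold activation: σ(x) = 1 if x ≥ 0 else 0. -/
noncomputable def thresh (x : ℝ) : ℝ := if 0 ≤ x then 1 else 0

/-- Rescaling each LIF neuron's membrane by the inverse of its scale-bearing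
block norm `a_i = (‖P_in[:,i]‖_p^p + |U_thr,i|^p)^{1/p}` yields an LIF network
with identical spike outputs at all timesteps whose scale-bearing blocks are
normalized to unit ℓ_p^p mass. -/
theorem lif_normalization_preserves_spikes {dIn m : ℕ} (p : ℝ) (hp : 1 ≤ p)
    (Pin : Matrix (Fin dIn) (Fin m) ℝ) (B Uthr : Fin m → ℝ)
    (a : Fin m → ℝ)
    (ha_def : ∀ i, a i = ((∑ j, |Pin j i| ^ p) + |Uthr i| ^ p) ^ (1 / p))
    (ha : ∀ i, 0 < a i)
    (Sprev : ℕ → Fin dIn → ℝ)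
    (U Ubar S Sbar : ℕ → Fin m → ℝ)
    (hS : ∀ t i, S t i = thresh (U t i))
    (hSbar : ∀ t i, Sbar t i = thresh (Ubar t i))
    (hU : ∀ t i, U (t + 1) i
      = (∑ j, Sprev (t + 1) j * Pin j i) + U t i * B i - S t i * Uthr i)
    (hUbar : ∀ t i, Ubar (t + 1) i
      = (∑ j, Sprev (t + 1) j * (Pin j i / a i)) + Ubar t i * B i
          - Sbar t i * (Uthr i / a i))
    (h0 : ∀ i, Ubar 0 i = U 0 i / a i) :
    (∀ t i, Sbar t i = S t i) ∧
    (∀ i, (∑ j, |Pin j i / a i| ^ p) + |Uthr i / a i| ^ p = 1) := by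
  have hp0 : p ≠ 0 := by linarith
  have hthresh : ∀ (x c : ℝ), 0 < c → thresh (x / c) = thresh x := by
    intro x c hc
    unfold thresh
    rcases le_or_gt 0 x with hx | hx
    · rw [if_pos hx, if_pos (div_nonneg hx hc.le)]
    · rw [if_neg (not_le.mpr hx), if_neg (not_le.mpr (div_neg_of_neg_of_pos hx hc))]
  have key : ∀ t, ∀ i, Ubar t i = U t i / a i := by
    intro t
    induction t with
    | zero => exact h0
    | succ t ih =>
      intro i
      rw [hUbar, hU, ih i, hSbar, ih i, hthresh _ _ (ha i), ← hS]
      have : ∀ j, Sprev (t + 1) j * (Pin j i / a i)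
          = (Sprev (t + 1) j * Pin j i) / a i := fun j => by ring
      simp only [this, ← Finset.sum_div]
      field_simp
  constructor
  · intro t i
    rw [hSbar, key t i, hthresh _ _ (ha i), hS]
  · intro i
    have hs : 0 ≤ (∑ j, |Pin j i| ^ p) + |Uthr i| ^ p := by
      apply add_nonneg
      · exact Finset.sum_nonneg fun j _ => Real.rpow_nonneg (abs_nonneg _) _
      · exact Real.rpow_nonneg (abs_nonneg _) _
    have hap : a i ^ p = (∑ j, |Pin j i| ^ p) + |Uthr i| ^ p := by
      rw [ha_def i, ← Real.rpow_mul hs, one_div_mul_cancel hp0, Real.rpow_one]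
    have hdiv : ∀ x : ℝ, |x / a i| ^ p = |x| ^ p / a i ^ p := by
      intro x
      rw [abs_div, abs_of_pos (ha i), Real.div_rpow (abs_nonneg _) (ha i).le]
    simp only [hdiv, ← Finset.sum_div]
    rw [← add_div, ← hap, div_self]
    exact ne_of_gt (Real.rpow_pos_of_pos (ha i) p)
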